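/- Let 1 < p < q < ∞, a(x) ≥ 0, and φ(x,t) = (1/p)t^p + (1/q)a(x)t^q. Let φ*(x,s) = sup_{t ≥ 0}(st − φ(x,t)) be the convex conjugate in the t-variable. Then there exist constants c₁, c₂ > 0 depending only on p and q such that for all x and s ≥ 0, c₁·min(s^{p'}, a(x)^{1-q'} s^{q'}) ≤ φ*(x,s) ≤ c₂·min(s^{p'}, a(x)^{1-q'} s^{q'}), where p' = p/(p-1), q' = q/(q-1), and 0^{1-q'} is interpreted as ∞ (so that a(x)^{1-q'}s^{q'} = ∞·s^{q'} is ignored in the min when a(x)=0 and s>0; when a(x)=0 the bound reads c₁ s^{p'} ≤ φ*(x,s) ≤ c₂ s^{p'}). -/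

import Mathlib

/-- The convex conjugate in the second variable:
`φ*(x,s) = sup_{t ≥ 0} (s·t − φ(x,t))`. -/
noncomputable def conjFn {n : ℕ} (φ : (Fin n → ℝ) → ℝ → ℝ) :
    (Fin n → ℝ) → ℝ → ℝ :=
  fun x s => sSup {y : ℝ | ∃ t : ℝ, 0 ≤ t ∧ y = s * t - φ x t}

/-- For the double phase function `φ(x,t) = (1/p)t^p + (1/q)a(x)t^q`
with `1 < p < q` and `a ≥ 0`, there are constants `c₁, c₂ > 0` depending only on
`p, q` such that `c₁·min(s^p', a(x)^(1-q')·s^q') ≤ φ*(x,s) ≤ c₂·min(s^p', a(x)^(1-q')·s^q')`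
for all `s ≥ 0`, where `p' = p/(p-1)`, `q' = q/(q-1)`, and with the convention
`0^(1-q') = ∞` (so when `a(x) = 0` the bound reads `c₁ s^p' ≤ φ*(x,s) ≤ c₂ s^p'`). -/
theorem double_phase_conjugate_formula (n : ℕ) (p q : ℝ) (hp : 1 < p) (hpq : p < q) :
    ∃ c₁ c₂ : ℝ, 0 < c₁ ∧ 0 < c₂ ∧
      ∀ (a : (Fin n → ℝ) → ℝ), (∀ x, 0 ≤ a x) →
      ∀ (φ : (Fin n → ℝ) → ℝ → ℝ),
        (∀ x t, φ x t = (1 / p) * t ^ p + (1 / q) * a x * t ^ q) →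
      ∀ (x : Fin n → ℝ) (s : ℝ), 0 ≤ s →
        c₁ * (if a x = 0 then s ^ (p / (p - 1))
              else min (s ^ (p / (p - 1)))
                ((a x) ^ (1 - q / (q - 1)) * s ^ (q / (q - 1))))
            ≤ conjFn φ x s ∧
        conjFn φ x s
            ≤ c₂ * (if a x = 0 then s ^ (p / (p - 1))
              else min (s ^ (p / (p - 1)))
                ((a x) ^ (1 - q / (q - 1)) * s ^ (q / (q - 1)))) := by
  have hq : 1 < q := hp.trans hpq
  have hp0 : (0:ℝ) < p := by linarith
  have hq0 : (0:ℝ) < q := by linarith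
  have hp1 : (0:ℝ) < p - 1 := by linarith
  have hq1 : (0:ℝ) < q - 1 := by linarith
  have hpc : p.HolderConjugate (p / (p - 1)) := Real.HolderConjugate.conjExponent hp
  have hqc : q.HolderConjugate (q / (q - 1)) := Real.HolderConjugate.conjExponent hq
  have hp'1 : 1 < p / (p - 1) := hpc.symm.lt
  have hq'1 : 1 < q / (q - 1) := hqc.symm.lt
  have hp'eq : p / (p - 1) = 1 + (p - 1)⁻¹ := by field_simp; ring
  have hq'eq : q / (q - 1) = 1 + (q - 1)⁻¹ := by field_simp; ring
  have h1mq' : 1 - q / (q - 1) = -(q - 1)⁻¹ := by field_simp; ring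
  set ε : ℝ := min 1 ((4:ℝ)⁻¹ ^ (p - 1)⁻¹) with hεdef
  have hε0 : 0 < ε := lt_min one_pos (Real.rpow_pos_of_pos (by norm_num) _)
  have hε1 : ε ≤ 1 := min_le_left _ _
  have hεp : ε ^ (p - 1) ≤ 4⁻¹ := by
    calc ε ^ (p - 1) ≤ ((4:ℝ)⁻¹ ^ (p - 1)⁻¹) ^ (p - 1) :=
          Real.rpow_le_rpow hε0.le (min_le_right _ _) hp1.le
      _ = 4⁻¹ := by
          rw [← Real.rpow_mul (by norm_num), inv_mul_cancel₀ hp1.ne', Real.rpow_one]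
  have hεq : ε ^ (q - 1) ≤ 4⁻¹ :=
    (Real.rpow_le_rpow_of_exponent_ge hε0 hε1 (by linarith)).trans hεp
  refine ⟨ε / 2, 1, half_pos hε0, one_pos, ?_⟩
  intro a ha φ hφ x s hs
  have hA0 : 0 ≤ a x := ha x
  set S : Set ℝ := {y : ℝ | ∃ t : ℝ, 0 ≤ t ∧ y = s * t - φ x t} with hSdef
  have hconj : conjFn φ x s = sSup S := rfl
  -- upper bound for each element of S (Young's inequality with exponent p)
  have key1 : ∀ t : ℝ, 0 ≤ t → s * t - φ x t ≤ s ^ (p / (p - 1)) / (p / (p - 1)) := by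
    intro t ht
    have hy := Real.young_inequality_of_nonneg ht hs hpc
    have h2 : 0 ≤ 1 / q * a x * t ^ q :=
      mul_nonneg (mul_nonneg (by positivity) hA0) (Real.rpow_nonneg ht q)
    have e1 : (1:ℝ) / p * t ^ p = t ^ p / p := by ring
    have e2 : t * s = s * t := mul_comm _ _
    rw [hφ]
    linarith
  have hbdd : BddAbove S := by
    refine ⟨s ^ (p / (p - 1)) / (p / (p - 1)), ?_⟩
    rintro y ⟨t, ht, rfl⟩
    exact key1 t ht
  have h0mem : (0:ℝ) ∈ S := by
    refine ⟨0, le_refl 0, ?_⟩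
    rw [hφ, Real.zero_rpow hp0.ne', Real.zero_rpow hq0.ne']
    ring
  -- the common upper bound expression
  have hub : sSup S ≤ (if a x = 0 then s ^ (p / (p - 1))
      else min (s ^ (p / (p - 1))) ((a x) ^ (1 - q / (q - 1)) * s ^ (q / (q - 1)))) := by
    apply csSup_le ⟨0, h0mem⟩
    rintro y ⟨t, ht, rfl⟩
    have b1 : s * t - φ x t ≤ s ^ (p / (p - 1)) :=
      (key1 t ht).trans (div_le_self (Real.rpow_nonneg hs _) hp'1.le)
    by_cases hA : a x = 0
    · simp only [hA, if_true]
      exact b1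
    · have hApos : 0 < a x := lt_of_le_of_ne hA0 (Ne.symm hA)
      have b2 : s * t - φ x t ≤ (a x) ^ (1 - q / (q - 1)) * s ^ (q / (q - 1)) := by
        set u : ℝ := (a x) ^ q⁻¹ * t with hudef
        set v : ℝ := (a x) ^ (-q⁻¹) * s with hvdef
        have hu : 0 ≤ u := mul_nonneg (Real.rpow_nonneg hA0 _) ht
        have hv : 0 ≤ v := mul_nonneg (Real.rpow_nonneg hA0 _) hs
        have hy := Real.young_inequality_of_nonneg hu hv hqc
        have huv : u * v = s * t := by
          have hprod : (a x) ^ q⁻¹ * (a x) ^ (-q⁻¹) = 1 := by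
            rw [← Real.rpow_add hApos]; simp
          calc u * v = ((a x) ^ q⁻¹ * (a x) ^ (-q⁻¹)) * (t * s) := by
                rw [hudef, hvdef]; ring
            _ = s * t := by rw [hprod]; ring
        have huq : u ^ q = a x * t ^ q := by
          rw [hudef, Real.mul_rpow (Real.rpow_nonneg hA0 _) ht,
            ← Real.rpow_mul hA0, inv_mul_cancel₀ hq0.ne', Real.rpow_one]
        have hvq : v ^ (q / (q - 1)) = (a x) ^ (1 - q / (q - 1)) * s ^ (q / (q - 1)) := by
          rw [hvdef, Real.mul_rpow (Real.rpow_nonneg hA0 _) hs, ← Real.rpow_mul hA0]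
          congr 2
          field_simp; ring
        have h3 : 0 ≤ 1 / p * t ^ p :=
          mul_nonneg (by positivity) (Real.rpow_nonneg ht p)
        have h4 : u ^ q / q = 1 / q * a x * t ^ q := by rw [huq]; ring
        have h5 : v ^ (q / (q - 1)) / (q / (q - 1)) ≤ v ^ (q / (q - 1)) :=
          div_le_self (Real.rpow_nonneg hv _) hq'1.le
        rw [hφ, ← hvq]
        linarith
      simp only [hA, if_false]
      exact le_min b1 b2
  -- the chosen test point for the lower bound
  set u0 : ℝ := if a x = 0 then s ^ (p - 1)⁻¹
      else min (s ^ (p - 1)⁻¹) ((s / a x) ^ (q - 1)⁻¹) with hu0def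
  have hu0nn : 0 ≤ u0 := by
    rw [hu0def]; split_ifs
    · exact Real.rpow_nonneg hs _
    · exact le_min (Real.rpow_nonneg hs _)
        (Real.rpow_nonneg (div_nonneg hs hA0) _)
  set t0 : ℝ := ε * u0 with ht0def
  have ht0 : 0 ≤ t0 := mul_nonneg hε0.le hu0nn
  have hst0 : 0 ≤ s * t0 := mul_nonneg hs ht0
  have hsp : s * s ^ (p - 1)⁻¹ = s ^ (p / (p - 1)) := by
    rw [hp'eq, Real.rpow_add' hs (by positivity), Real.rpow_one]
  have hsq : s * s ^ (q - 1)⁻¹ = s ^ (q / (q - 1)) := by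
    rw [hq'eq, Real.rpow_add' hs (by positivity), Real.rpow_one]
  have hsu : s * u0 = (if a x = 0 then s ^ (p / (p - 1))
      else min (s ^ (p / (p - 1))) ((a x) ^ (1 - q / (q - 1)) * s ^ (q / (q - 1)))) := by
    rw [hu0def]
    by_cases hA : a x = 0
    · simp only [hA, if_true]
      exact hsp
    · have hApos : 0 < a x := lt_of_le_of_ne hA0 (Ne.symm hA)
      simp only [hA, if_false]
      rw [mul_min_of_nonneg _ _ hs, hsp]
      congr 1
      rw [Real.div_rpow hs hA0, h1mq', Real.rpow_neg hA0]
      rw [div_eq_mul_inv, ← mul_assoc, hsq]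
      ring
  have hle1 : u0 ≤ s ^ (p - 1)⁻¹ := by
    rw [hu0def]; split_ifs
    · exact le_refl _
    · exact min_le_left _ _
  -- estimate for the p-part at t0
  have key_t0p : t0 ^ p ≤ ε ^ (p - 1) * (s * t0) := by
    have h1 : t0 ^ (p - 1) ≤ ε ^ (p - 1) * s := by
      calc t0 ^ (p - 1) ≤ (ε * s ^ (p - 1)⁻¹) ^ (p - 1) :=
            Real.rpow_le_rpow ht0 (mul_le_mul_of_nonneg_left hle1 hε0.le) hp1.le
        _ = ε ^ (p - 1) * s := by
            rw [Real.mul_rpow hε0.le (Real.rpow_nonneg hs _), ← Real.rpow_mul hs,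
              inv_mul_cancel₀ hp1.ne', Real.rpow_one]
    have h2 : t0 ^ p = t0 ^ (p - 1) * t0 := by
      nth_rewrite 1 [show p = (p - 1) + 1 by ring]
      rw [Real.rpow_add' ht0 (by rw [sub_add_cancel]; exact hp0.ne'), Real.rpow_one]
    calc t0 ^ p = t0 ^ (p - 1) * t0 := h2
      _ ≤ (ε ^ (p - 1) * s) * t0 := mul_le_mul_of_nonneg_right h1 ht0
      _ = ε ^ (p - 1) * (s * t0) := by ring
  -- estimate for the q-part at t0
  have key_t0q : a x * t0 ^ q ≤ ε ^ (q - 1) * (s * t0) := by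
    by_cases hA : a x = 0
    · rw [hA, zero_mul]
      exact mul_nonneg (Real.rpow_nonneg hε0.le _) hst0
    · have hApos : 0 < a x := lt_of_le_of_ne hA0 (Ne.symm hA)
      have hle2 : u0 ≤ (s / a x) ^ (q - 1)⁻¹ := by
        rw [hu0def]; simp only [hA, if_false]
        exact min_le_right _ _
      have h1 : t0 ^ (q - 1) ≤ ε ^ (q - 1) * (s / a x) := by
        calc t0 ^ (q - 1) ≤ (ε * (s / a x) ^ (q - 1)⁻¹) ^ (q - 1) :=
              Real.rpow_le_rpow ht0 (mul_le_mul_of_nonneg_left hle2 hε0.le) hq1.le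
          _ = ε ^ (q - 1) * (s / a x) := by
              rw [Real.mul_rpow hε0.le (Real.rpow_nonneg (div_nonneg hs hA0) _),
                ← Real.rpow_mul (div_nonneg hs hA0), inv_mul_cancel₀ hq1.ne',
                Real.rpow_one]
      have h2 : t0 ^ q = t0 ^ (q - 1) * t0 := by
        nth_rewrite 1 [show q = (q - 1) + 1 by ring]
        rw [Real.rpow_add' ht0 (by rw [sub_add_cancel]; exact hq0.ne'), Real.rpow_one]
      calc a x * t0 ^ q = a x * (t0 ^ (q - 1) * t0) := by rw [h2]
        _ ≤ a x * ((ε ^ (q - 1) * (s / a x)) * t0) :=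
            mul_le_mul_of_nonneg_left (mul_le_mul_of_nonneg_right h1 ht0) hA0
        _ = ε ^ (q - 1) * (s * t0) := by field_simp
  -- the value of φ at t0 is at most half of s·t0
  have hφt0 : φ x t0 ≤ 1 / 2 * (s * t0) := by
    rw [hφ]
    have htp0 : 0 ≤ t0 ^ p := Real.rpow_nonneg ht0 p
    have htq0 : 0 ≤ a x * t0 ^ q := mul_nonneg hA0 (Real.rpow_nonneg ht0 q)
    have g1 : 1 / p * t0 ^ p ≤ 1 / 4 * (s * t0) := by
      have hb : t0 ^ p ≤ 4⁻¹ * (s * t0) :=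
        key_t0p.trans (mul_le_mul_of_nonneg_right hεp hst0)
      have : 1 / p * t0 ^ p ≤ 1 * t0 ^ p :=
        mul_le_mul_of_nonneg_right (by rw [div_le_one hp0]; linarith) htp0
      linarith
    have g2 : 1 / q * a x * t0 ^ q ≤ 1 / 4 * (s * t0) := by
      have hb : a x * t0 ^ q ≤ 4⁻¹ * (s * t0) :=
        key_t0q.trans (mul_le_mul_of_nonneg_right hεq hst0)
      have : 1 / q * (a x * t0 ^ q) ≤ 1 * (a x * t0 ^ q) :=
        mul_le_mul_of_nonneg_right (by rw [div_le_one hq0]; linarith) htq0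
      have e : 1 / q * a x * t0 ^ q = 1 / q * (a x * t0 ^ q) := by ring
      linarith
    linarith
  have hmem : s * t0 - φ x t0 ∈ S := ⟨t0, ht0, rfl⟩
  have hlb : s * t0 - φ x t0 ≤ sSup S := le_csSup hbdd hmem
  constructor
  · -- lower bound
    rw [hconj]
    have e : ε / 2 * (if a x = 0 then s ^ (p / (p - 1))
        else min (s ^ (p / (p - 1))) ((a x) ^ (1 - q / (q - 1)) * s ^ (q / (q - 1))))
        = 1 / 2 * (s * t0) := by
      rw [← hsu, ht0def]; ring
    rw [e]
    linarith
  · rw [hconj, one_mul]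
    exact hub
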